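/- Let f be L-smooth on ℝ^d (or on a ball containing the iterates), and suppose the sequence u_0, u_1, ..., u_t satisfies u_j = u_{j-1} - η v_{j-1} and the accumulated estimation error bound ‖v_{j-1} - ∇f(u_{j-1})‖² ≤ (c₁² L² / b) · Σ_{i=1}^{j-1} ‖u_i - u_{i-1}‖² for all j ≤ t, with b ≥ t, c₁ ≥ 1, and η ≤ 1/(2 c₁ L). Then f(u_t) - f(u_0) ≤ -(η/2) Σ_{j=1}^t ‖∇f(u_{j-1})‖² - (c₁ L / 4) Σ_{j=1}^t ‖u_j - u_{j-1}‖². -/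

import Mathlib

open InnerProductSpace
theorem descent_lemma {E : Type*} [NormedAddCommGroup E] [InnerProductSpace ℝ E]
    [CompleteSpace E]
    (f : E → ℝ) (g : E → E) (hg : ∀ x, HasGradientAt f (g x) x)
    (L : ℝ) (hlip : ∀ x y : E, ‖g x - g y‖ ≤ L * ‖x - y‖) (x y : E) :
    f y ≤ f x + ⟪g x, y - x⟫_ℝ + L / 2 * ‖y - x‖ ^ 2 := by
  set z : ℝ → E := fun s => x + s • (y - x) with hz
  have hzd : ∀ s : ℝ, HasDerivAt z (y - x) s := by
    intro s
    simpa [hz] using ((hasDerivAt_id s).smul_const (y - x)).const_add x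
  have hd : ∀ s : ℝ, HasDerivAt (fun s => f (z s)) ⟪g (z s), y - x⟫_ℝ s := by
    intro s
    have := ((hg (z s)).hasFDerivAt.comp_hasDerivAt s (hzd s))
    simpa [toDual_apply_apply, Function.comp_def] using this
  set φ : ℝ → ℝ := fun s => f (z s) - s * ⟪g x, y - x⟫_ℝ - s ^ 2 * (L / 2 * ‖y - x‖ ^ 2)
    with hφ
  have hφd : ∀ s : ℝ, HasDerivAt φ
      (⟪g (z s), y - x⟫_ℝ - ⟪g x, y - x⟫_ℝ - 2 * s * (L / 2 * ‖y - x‖ ^ 2)) s := by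
    intro s
    have h1 : HasDerivAt (fun s : ℝ => s * ⟪g x, y - x⟫_ℝ) ⟪g x, y - x⟫_ℝ s := by
      simpa using (hasDerivAt_id s).mul_const ⟪g x, y - x⟫_ℝ
    have h2 : HasDerivAt (fun s : ℝ => s ^ 2 * (L / 2 * ‖y - x‖ ^ 2))
        (2 * s * (L / 2 * ‖y - x‖ ^ 2)) s := by
      simpa using (hasDerivAt_pow 2 s).mul_const (L / 2 * ‖y - x‖ ^ 2)
    exact ((hd s).sub h1).sub h2
  have hanti : AntitoneOn φ (Set.Icc 0 1) := by
    apply antitoneOn_of_deriv_nonpos (convex_Icc 0 1)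
    · exact fun s _ => ((hφd s).differentiableAt).continuousAt.continuousWithinAt
    · intro s _
      exact ((hφd s).differentiableAt).differentiableWithinAt
    · intro s hs
      rw [interior_Icc] at hs
      rw [(hφd s).deriv]
      have h3 : ⟪g (z s) - g x, y - x⟫_ℝ ≤ ‖g (z s) - g x‖ * ‖y - x‖ :=
        real_inner_le_norm _ _
      have h4 : ‖g (z s) - g x‖ ≤ L * (s * ‖y - x‖) := by
        have := hlip (z s) x
        simpa [hz, norm_smul, abs_of_pos hs.1] using this
      have h5 : ⟪g (z s), y - x⟫_ℝ - ⟪g x, y - x⟫_ℝ = ⟪g (z s) - g x, y - x⟫_ℝ := by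
        rw [inner_sub_left]
      rw [h5]
      nlinarith [norm_nonneg (y - x), h3, h4, mul_le_mul_of_nonneg_right h4 (norm_nonneg (y - x))]
  have := hanti (Set.left_mem_Icc.2 zero_le_one) (Set.right_mem_Icc.2 zero_le_one) zero_le_one
  simp only [hφ, hz] at this
  simp only [one_smul, zero_smul, add_zero] at this
  have hzy : x + (y - x) = y := by abel
  rw [hzy] at this
  linarith



/-- Deterministic core of the variance-reduced descent lemma. -/
theorem stmt_4 (d : ℕ) (f : EuclideanSpace ℝ (Fin d) → ℝ)
    (g : EuclideanSpace ℝ (Fin d) → EuclideanSpace ℝ (Fin d))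
    (hg : ∀ x, HasGradientAt f (g x) x)
    (L : ℝ) (hL : 0 < L)
    (hlip : ∀ x y : EuclideanSpace ℝ (Fin d), ‖g x - g y‖ ≤ L * ‖x - y‖)
    (u v : ℕ → EuclideanSpace ℝ (Fin d))
    (η c₁ : ℝ) (b t : ℕ)
    (hb : t ≤ b) (hc₁ : 1 ≤ c₁) (hη : 0 < η) (hη' : η ≤ 1/(2*c₁*L))
    (hstep : ∀ j ∈ Finset.Icc 1 t, u j = u (j-1) - η • v (j-1))
    (herr : ∀ j ∈ Finset.Icc 1 t,
      ‖v (j-1) - g (u (j-1))‖^2 ≤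
        c₁^2 * L^2 / (b : ℝ) * ∑ i ∈ Finset.Icc 1 (j-1), ‖u i - u (i-1)‖^2) :
    f (u t) - f (u 0) ≤ -(η/2) * ∑ j ∈ Finset.Icc 1 t, ‖g (u (j-1))‖^2
      - c₁ * L / 4 * ∑ j ∈ Finset.Icc 1 t, ‖u j - u (j-1)‖^2 := by
  have hc₁L : 0 < c₁ * L := mul_pos (lt_of_lt_of_le one_pos hc₁) hL
  have hηcL : η * (c₁ * L) ≤ 1 / 2 := by
    rw [le_div_iff₀ (by positivity)] at hη'
    nlinarith
  -- per-step bound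
  have step : ∀ j ∈ Finset.Icc 1 t, f (u j) - f (u (j-1)) ≤
      -(η/2) * ‖g (u (j-1))‖^2 + (η/2) * ‖v (j-1) - g (u (j-1))‖^2
        - (1/(2*η) - L/2) * ‖u j - u (j-1)‖^2 := by
    intro j hj
    have hd := descent_lemma f g hg L hlip (u (j-1)) (u j)
    have hdiff : u j - u (j-1) = -(η • v (j-1)) := by rw [hstep j hj]; abel
    have hip : ⟪g (u (j-1)), u j - u (j-1)⟫_ℝ = -η * ⟪g (u (j-1)), v (j-1)⟫_ℝ := by
      rw [hdiff, inner_neg_right, real_inner_smul_right]; ring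
    have hnorm : ‖u j - u (j-1)‖^2 = η^2 * ‖v (j-1)‖^2 := by
      rw [hdiff, norm_neg, norm_smul, mul_pow, Real.norm_eq_abs, sq_abs]
    have hexp : ‖v (j-1) - g (u (j-1))‖^2
        = ‖v (j-1)‖^2 - 2 * ⟪g (u (j-1)), v (j-1)⟫_ℝ + ‖g (u (j-1))‖^2 := by
      rw [@norm_sub_sq_real, real_inner_comm]
    rw [hip] at hd
    rw [hnorm, hexp]
    have hkey : -(η/2) * ‖g (u (j-1))‖^2
        + (η/2) * (‖v (j-1)‖^2 - 2 * ⟪g (u (j-1)), v (j-1)⟫_ℝ + ‖g (u (j-1))‖^2)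
        - (1/(2*η) - L/2) * (η^2 * ‖v (j-1)‖^2)
        = -η * ⟪g (u (j-1)), v (j-1)⟫_ℝ + L/2 * (η^2 * ‖v (j-1)‖^2) := by
      field_simp
      ring
    rw [hkey]
    rw [hnorm] at hd
    linarith
  -- telescoping
  have tel : f (u t) - f (u 0) = ∑ j ∈ Finset.Icc 1 t, (f (u j) - f (u (j-1))) := by
    rw [← Finset.Ico_add_one_right_eq_Icc, Finset.sum_Ico_eq_sum_range,
      ← Finset.sum_range_sub (fun i => f (u i)) t]
    apply Finset.sum_congr (by simp)
    intro i _
    have h1 : 1 + i - 1 = i := by omega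
    simp only [h1, add_comm 1 i, Nat.add_sub_cancel]
  -- error sum bound
  set D := ∑ j ∈ Finset.Icc 1 t, ‖u j - u (j-1)‖^2 with hD
  have hDnn : 0 ≤ D := Finset.sum_nonneg fun j _ => sq_nonneg _
  have herr_sum : ∑ j ∈ Finset.Icc 1 t, ‖v (j-1) - g (u (j-1))‖^2 ≤ c₁^2 * L^2 * D := by
    calc ∑ j ∈ Finset.Icc 1 t, ‖v (j-1) - g (u (j-1))‖^2
        ≤ ∑ j ∈ Finset.Icc 1 t,
          (c₁^2 * L^2 / (b:ℝ) * ∑ i ∈ Finset.Icc 1 (j-1), ‖u i - u (i-1)‖^2) :=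
          Finset.sum_le_sum herr
      _ ≤ ∑ j ∈ Finset.Icc 1 t, (c₁^2 * L^2 / (b:ℝ) * D) := by
          apply Finset.sum_le_sum
          intro j hj
          apply mul_le_mul_of_nonneg_left _ (by positivity)
          apply Finset.sum_le_sum_of_subset_of_nonneg
          · apply Finset.Icc_subset_Icc_right
            simp only [Finset.mem_Icc] at hj; omega
          · intro i _ _; exact sq_nonneg _
      _ = (t:ℝ) * (c₁^2 * L^2 / (b:ℝ) * D) := by
          rw [Finset.sum_const, Nat.card_Icc]; simp [nsmul_eq_mul]
      _ ≤ c₁^2 * L^2 * D := by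
          rcases Nat.eq_zero_or_pos b with hb0 | hb0
          · have ht0 : t = 0 := by omega
            simp only [ht0, Nat.cast_zero, zero_mul]
            positivity
          · have hbpos : (0:ℝ) < b := by exact_mod_cast hb0
            have htb : (t:ℝ)/(b:ℝ) ≤ 1 := (div_le_one hbpos).2 (by exact_mod_cast hb)
            calc (t:ℝ) * (c₁^2 * L^2 / (b:ℝ) * D) = ((t:ℝ)/(b:ℝ)) * (c₁^2 * L^2 * D) := by
                  ring
              _ ≤ 1 * (c₁^2 * L^2 * D) := by
                  apply mul_le_mul_of_nonneg_right htb (by positivity)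
              _ = c₁^2 * L^2 * D := one_mul _
  -- combine
  have main := Finset.sum_le_sum step
  rw [← tel, Finset.sum_sub_distrib, Finset.sum_add_distrib, ← Finset.mul_sum,
    ← Finset.mul_sum, ← Finset.mul_sum] at main
  have hfinal : (η/2) * ∑ j ∈ Finset.Icc 1 t, ‖v (j-1) - g (u (j-1))‖^2
      - (1/(2*η) - L/2) * D ≤ -(c₁ * L / 4) * D := by
    have h1 : (η/2) * ∑ j ∈ Finset.Icc 1 t, ‖v (j-1) - g (u (j-1))‖^2
        ≤ (η/2) * (c₁^2 * L^2 * D) := mul_le_mul_of_nonneg_left herr_sum (by positivity)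
    have key : η * (c₁^2 * L^2) / 2 + L/2 + c₁ * L / 4 ≤ 1/(2*η) := by
      rw [le_div_iff₀ (by positivity)]
      have hLη : L * η ≤ 1/2 := by nlinarith
      nlinarith [mul_pos (mul_pos hc₁L hc₁L) hη, sq_nonneg η]
    nlinarith [mul_le_mul_of_nonneg_right key hDnn]
  linarith
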